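/- Let H be a complex Hilbert space and let u, v, w be unit vectors in H. Then δ(u,w) ≤ δ(u,v) + δ(v,w), where δ(a,b) = √(1 − |⟨a,b⟩|²). In particular δ is a pseudometric on the unit sphere of H (and hence the function δ_H(x,y) = √(1 − |⟨k̂_x,k̂_y⟩|²) associated to a reproducing kernel Hilbert space is a pseudometric on the underlying set). -/

import Mathlib

/-- For unit vectors `u, v, w` in a complex Hilbert space,
`δ(u,w) ≤ δ(u,v) + δ(v,w)` where `δ(a,b) = √(1 − |⟨a,b⟩|²)`; hence `δ` is a
pseudometric on the unit sphere (and the function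
`δ_H(x,y) = √(1 − |⟨k̂_x,k̂_y⟩|²)` of a RKHS is a pseudometric on the
underlying set). -/
theorem delta_triangle {H : Type*} [NormedAddCommGroup H] [InnerProductSpace ℂ H]
    (u v w : H) (hu : ‖u‖ = 1) (hv : ‖v‖ = 1) (hw : ‖w‖ = 1) :
    Real.sqrt (1 - ‖(inner ℂ u w : ℂ)‖ ^ 2)
      ≤ Real.sqrt (1 - ‖(inner ℂ u v : ℂ)‖ ^ 2) + Real.sqrt (1 - ‖(inner ℂ v w : ℂ)‖ ^ 2) := by
  set a := ‖(inner ℂ u v : ℂ)‖ with ha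
  set b := ‖(inner ℂ v w : ℂ)‖ with hb
  set c := ‖(inner ℂ u w : ℂ)‖ with hc
  have ha0 : 0 ≤ a := norm_nonneg _
  have hb0 : 0 ≤ b := norm_nonneg _
  have hc0 : 0 ≤ c := norm_nonneg _
  have ha1 : a ≤ 1 := by
    have := norm_inner_le_norm (𝕜 := ℂ) u v
    rwa [hu, hv, one_mul] at this
  have hb1 : b ≤ 1 := by
    have := norm_inner_le_norm (𝕜 := ℂ) v w
    rwa [hv, hw, one_mul] at this
  set s := Real.sqrt (1 - a ^ 2) with hsdef
  set t := Real.sqrt (1 - b ^ 2) with htdef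
  have hs0 : 0 ≤ s := Real.sqrt_nonneg _
  have ht0 : 0 ≤ t := Real.sqrt_nonneg _
  have hs2 : s ^ 2 = 1 - a ^ 2 := Real.sq_sqrt (by nlinarith)
  have ht2 : t ^ 2 = 1 - b ^ 2 := Real.sq_sqrt (by nlinarith)
  have hvv : (inner ℂ v v : ℂ) = 1 := by
    rw [inner_self_eq_norm_sq_to_K, hv]; norm_num
  set x := u - (inner ℂ v u : ℂ) • v with hx
  set y := w - (inner ℂ v w : ℂ) • v with hy
  have hxy : (inner ℂ x y : ℂ) = inner ℂ u w - (inner ℂ u v : ℂ) * inner ℂ v w := by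
    simp only [hx, hy, inner_sub_left, inner_sub_right, inner_smul_left, inner_smul_right,
      inner_conj_symm, hvv, mul_one]
    ring
  have hxn : ‖x‖ = s := by
    have h1 : ‖x‖ ^ 2 = 1 - a ^ 2 := by
      have := @norm_sub_sq ℂ _ _ _ _ u ((inner ℂ v u : ℂ) • v)
      rw [hx, this, inner_smul_right, hu, norm_smul, hv]
      have h2 : ((inner ℂ v u : ℂ)) * (inner ℂ u v : ℂ) = ((a : ℝ) : ℂ) ^ 2 := by
        rw [← inner_conj_symm u v, Complex.mul_conj']
        norm_cast
        rw [ha, norm_inner_symm u v]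
      rw [h2, show ‖(inner ℂ v u : ℂ)‖ = a from (norm_inner_symm v u).trans ha.symm]
      have h3 : RCLike.re (((a : ℝ) : ℂ) ^ 2) = a ^ 2 := by norm_cast
      rw [h3]; ring
    calc ‖x‖ = Real.sqrt (‖x‖ ^ 2) := by rw [Real.sqrt_sq (norm_nonneg _)]
      _ = s := by rw [h1]
  have hyn : ‖y‖ = t := by
    have h1 : ‖y‖ ^ 2 = 1 - b ^ 2 := by
      have := @norm_sub_sq ℂ _ _ _ _ w ((inner ℂ v w : ℂ) • v)
      rw [hy, this, inner_smul_right, hw, norm_smul, hv]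
      have h2 : ((inner ℂ v w : ℂ)) * (inner ℂ w v : ℂ) = ((b : ℝ) : ℂ) ^ 2 := by
        rw [← inner_conj_symm v w, mul_comm, Complex.mul_conj']
        norm_cast
        rw [hb, norm_inner_symm w v]
      rw [h2]
      have h3 : RCLike.re (((b : ℝ) : ℂ) ^ 2) = b ^ 2 := by norm_cast
      rw [h3]; ring
    calc ‖y‖ = Real.sqrt (‖y‖ ^ 2) := by rw [Real.sqrt_sq (norm_nonneg _)]
      _ = t := by rw [h1]
  have hkey : a * b - s * t ≤ c := by
    have hcs : ‖(inner ℂ x y : ℂ)‖ ≤ s * t := by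
      calc ‖(inner ℂ x y : ℂ)‖ ≤ ‖x‖ * ‖y‖ := norm_inner_le_norm x y
        _ = s * t := by rw [hxn, hyn]
    have h2 : ‖(inner ℂ u v : ℂ) * inner ℂ v w‖ - ‖(inner ℂ u w : ℂ)‖
        ≤ ‖(inner ℂ u v : ℂ) * inner ℂ v w - inner ℂ u w‖ := norm_sub_norm_le _ _
    have h3 : ‖(inner ℂ u v : ℂ) * inner ℂ v w - inner ℂ u w‖ = ‖(inner ℂ x y : ℂ)‖ := by
      rw [hxy, norm_sub_rev]
    rw [norm_mul, ← ha, ← hb, ← hc, h3] at h2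
    linarith [le_trans h2 hcs]
  have hfin : Real.sqrt (1 - c ^ 2) ≤ s + t := by
    rw [show s + t = Real.sqrt ((s + t) ^ 2) from (Real.sqrt_sq (by positivity)).symm]
    apply Real.sqrt_le_sqrt
    rcases le_or_gt (s * t) (a * b) with h | h
    · nlinarith [mul_nonneg (mul_nonneg hs0 ht0) (by nlinarith : (0:ℝ) ≤ s * t + 1 - a * b),
        sq_nonneg (c - (a * b - s * t)), mul_nonneg hs0 ht0]
    · nlinarith [mul_pos (show (0:ℝ) < s * t - a * b by linarith)
        (show (0:ℝ) < s * t + a * b by nlinarith [mul_nonneg ha0 hb0]),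
        mul_nonneg ha0 hb0, sq_nonneg c]
  exact hfin
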